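/- The subgroup Γ_B of SL(2,ℝ) is an infinitely generated discrete subgroup: Γ_B with the topology induced from SL(2,ℝ) is a discrete topological space, and Γ_B is not finitely generated. -/

import Mathlib

open UpperHalfPlane MatrixGroups

noncomputable section

/-- `s k = Σᵢ 2·tᵢ·3ⁱ` where `k = Σᵢ tᵢ·2ⁱ` is the binary expansion of `k`;
equivalently `s 0 = 0`, `s (2j) = 3·(s j)`, `s (2j+1) = 3·(s j) + 2`. -/
def s : ℕ → ℕ
  | 0 => 0
  | k + 1 =>
    if (k + 1) % 2 = 0 then 3 * s ((k + 1) / 2)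
    else 3 * s ((k + 1) / 2) + 2
decreasing_by all_goals (simp_wf; omega)

/-- Left endpoint of the middle third removed at stage `n` from the `k`-th interval of
stage `n−1` of the middle-thirds construction on `[1,2]`. -/
def pB (n k : ℕ) : ℝ := 1 + (3 * s k + 1) / 3 ^ n

/-- Right endpoint of the middle third removed at stage `n` from the `k`-th interval of
stage `n−1` of the middle-thirds construction on `[1,2]`. -/
def qB (n k : ℕ) : ℝ := 1 + (3 * s k + 2) / 3 ^ n

/-- `α(n,k)`, the midpoint of the removed middle third. -/
def alphaB (n k : ℕ) : ℝ := (pB n k + qB n k) / 2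

/-- `q̃(n,k) := q(n,k) − 1/(6·3^n)`. -/
def qtB (n k : ℕ) : ℝ := qB n k - 1 / (6 * 3 ^ n)

/-- `ρ(n) := 1/(12·3^n)`. -/
def rhoB (n : ℕ) : ℝ := 1 / (12 * 3 ^ n)

/-- `σ(n,m) := 1/(60·3^n·2^m)`. -/
def sigB (n m : ℕ) : ℝ := 1 / (60 * 3 ^ n * 2 ^ m)

lemma rhoB_ne (n : ℕ) : rhoB n ≠ 0 := by unfold rhoB; positivity

lemma sigB_ne (n m : ℕ) : sigB n m ≠ 0 := by unfold sigB; positivity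

/-- `N(β,β',r)` is the element of `SL(2,ℝ)` whose Möbius transformation has isometric circle
the half-circle of radius `r` centered at `β`, mapped onto the half-circle of radius `r`
centered at `β'`. -/
def Nmat (β β' r : ℝ) (hr : r ≠ 0) : SL(2, ℝ) :=
  ⟨!![β' / r, -(β * β' + r ^ 2) / r; 1 / r, -β / r], by
    rw [Matrix.det_fin_two_of]; field_simp; ring⟩

/-- The subgroup `Γ_B` of `SL(2,ℝ)` generated by the Möbius transformations of the Blooming
Cantor tree construction. -/
def ΓB : Subgroup SL(2, ℝ) :=
  Subgroup.closure
    ({g | ∃ n k : ℕ, 1 ≤ n ∧ k < 2 ^ (n - 1) ∧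
        g = Nmat (alphaB n k) (-(alphaB n k)) (rhoB n) (rhoB_ne n)} ∪
      {g | ∃ n m k : ℕ, 1 ≤ n ∧ 1 ≤ m ∧ k < 2 ^ (n - 1) ∧
        (g = Nmat (pB n k + 17 * sigB n m) (-(pB n k + 13 * sigB n m)) (sigB n m)
            (sigB_ne n m) ∨
         g = Nmat (pB n k + 13 * sigB n m) (-(pB n k + 17 * sigB n m)) (sigB n m)
            (sigB_ne n m) ∨
         g = Nmat (qtB n k - 13 * sigB n m) (-(qtB n k - 17 * sigB n m)) (sigB n m)
            (sigB_ne n m) ∨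
         g = Nmat (qtB n k - 17 * sigB n m) (-(qtB n k - 13 * sigB n m)) (sigB n m)
            (sigB_ne n m))})

lemma s_zero : s 0 = 0 := by rw [s]
lemma s_succ (k : ℕ) : s (k+1) = if (k + 1) % 2 = 0 then 3 * s ((k + 1) / 2)
    else 3 * s ((k + 1) / 2) + 2 := by rw [s]

lemma s_even (j : ℕ) : s (2*j) = 3 * s j := by
  rcases j with _ | j
  · simp [s_zero]
  · rw [show 2*(j+1) = (2*j+1)+1 by ring, s_succ]
    rw [if_pos (by omega), show (2*j+1+1)/2 = j+1 by omega]

lemma s_odd (j : ℕ) : s (2*j+1) = 3 * s j + 2 := by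
  rw [s_succ, if_neg (by omega), show (2*j+1)/2 = j by omega]

lemma s_mono : ∀ k' , ∀ k < k', s k < s k' := by
  intro k'
  induction k' using Nat.strong_induction_on with
  | _ k' IH =>
    intro k hk
    rcases Nat.even_or_odd k' with ⟨b, hb⟩ | ⟨b, hb⟩
    · subst hb
      rw [show b + b = 2*b by ring, s_even]
      rcases Nat.even_or_odd k with ⟨a, ha⟩ | ⟨a, ha⟩
      · subst ha; rw [show a + a = 2*a by ring, s_even]
        have : s a < s b := IH b (by omega) a (by omega)
        omega
      · subst ha; rw [show 2*a+1 = 2*a+1 by rfl] at *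
        rw [s_odd]
        have : s a < s b := IH b (by omega) a (by omega)
        omega
    · subst hb
      rw [show 2*b+1 = 2*b+1 by rfl, s_odd]
      rcases Nat.even_or_odd k with ⟨a, ha⟩ | ⟨a, ha⟩
      · subst ha; rw [show a + a = 2*a by ring, s_even]
        rcases Nat.lt_or_ge a b with h | h
        · have : s a < s b := IH b (by omega) a h
          omega
        · have : a = b := by omega
          subst this; omega
      · subst ha; rw [s_odd]
        have : s a < s b := IH b (by omega) a (by omega)
        omega

-- containment: J(n+d, k') ⊆ 3^d-scaled J(n, k'/2^d)
lemma s_div_le (d : ℕ) : ∀ k', 3^d * s (k' / 2^d) ≤ s k' ∧ s k' + 1 ≤ 3^d * (s (k' / 2^d) + 1) := by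
  induction d with
  | zero => intro k'; simp
  | succ d IH =>
    intro k'
    have hdiv : k' / 2^(d+1) = (k'/2) / 2^d := by
      rw [pow_succ]; rw [Nat.div_div_eq_div_mul]; ring_nf
    have h2 : 3 * s (k'/2) ≤ s k' ∧ s k' ≤ 3 * s (k'/2) + 2 := by
      rcases Nat.even_or_odd k' with ⟨a, ha⟩ | ⟨a, ha⟩
      · subst ha; rw [show a + a = 2*a by ring, s_even, show 2*a/2 = a by omega]; omega
      · subst ha; rw [show 2*a+1 = 2*a+1 by rfl, s_odd, show (2*a+1)/2 = a by omega]; omega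
    have := IH (k'/2)
    rw [hdiv]
    constructor
    · calc 3^(d+1) * s ((k'/2)/2^d) = 3 * (3^d * s ((k'/2)/2^d)) := by ring
        _ ≤ 3 * s (k'/2) := by omega
        _ ≤ s k' := h2.1
    · calc s k' + 1 ≤ 3 * s (k'/2) + 3 := by omega
        _ = 3 * (s (k'/2) + 1) := by ring
        _ ≤ 3 * (3^d * (s (k'/2/2^d) + 1)) := by omega
        _ = 3^(d+1) * (s (k'/2/2^d) + 1) := by ring

-- avoidance of middle third at higher stage
lemma s_avoid (d : ℕ) : ∀ k', 1 ≤ d →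
    s k' + 1 ≤ 3^(d-1) * (3 * s (k'/2^d) + 1) ∨ 3^(d-1) * (3 * s (k'/2^d) + 2) ≤ s k' := by
  induction d with
  | zero => intro _ h; omega
  | succ d IH =>
    intro k' _
    rcases Nat.eq_zero_or_pos d with hd | hd
    · subst hd
      have e0 : (0:ℕ)+1-1 = 0 := rfl
      rw [e0, pow_zero, one_mul]
      rcases Nat.even_or_odd k' with ⟨a, ha⟩ | ⟨a, ha⟩
      · subst ha; rw [show a + a = 2*a by ring, s_even, show 2*a/2^1 = a by omega]; omega
      · subst ha; rw [show 2*a+1 = 2*a+1 by rfl, s_odd, show (2*a+1)/2^1 = a by omega]; omega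
    · have hdiv : k' / 2^(d+1) = (k'/2) / 2^d := by
        rw [pow_succ]; rw [Nat.div_div_eq_div_mul]; ring_nf
      have h2 : 3 * s (k'/2) ≤ s k' ∧ s k' ≤ 3 * s (k'/2) + 2 := by
        rcases Nat.even_or_odd k' with ⟨a, ha⟩ | ⟨a, ha⟩
        · subst ha; rw [show a + a = 2*a by ring, s_even, show 2*a/2 = a by omega]; omega
        · subst ha; rw [show 2*a+1 = 2*a+1 by rfl, s_odd, show (2*a+1)/2 = a by omega]; omega
      have := IH (k'/2) hd
      rw [hdiv]
      have he : d + 1 - 1 = (d-1) + 1 := by omega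
      rw [he, pow_succ]
      rcases this with h | h
      · left
        calc s k' + 1 ≤ 3*s (k'/2) + 3 := by omega
          _ = 3 * (s (k'/2) + 1) := by ring
          _ ≤ 3 * (3^(d-1) * (3 * s (k'/2/2^d) + 1)) := by omega
          _ = 3^(d-1)*3 * (3 * s (k'/2/2^d) + 1) := by ring
      · right
        calc 3^(d-1)*3 * (3 * s (k'/2/2^d) + 2) = 3*(3^(d-1) * (3 * s (k'/2/2^d) + 2)) := by ring
          _ ≤ 3 * s (k'/2) := by omega
          _ ≤ s k' := h2.1

lemma le_help {n n' : ℕ} (h : n ≤ n') {A B : ℕ} (h2 : A * 3^(n'-n) ≤ B) :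
    1 + (A:ℝ)/3^n ≤ 1 + (B:ℝ)/3^n' := by
  have h3 : (0:ℝ) < 3^n := by positivity
  have h3' : (0:ℝ) < 3^n' := by positivity
  have key : (A:ℝ) * 3^n' ≤ (B:ℝ) * 3^n := by
    have : (A:ℝ) * 3^(n'-n) ≤ B := by exact_mod_cast h2
    calc (A:ℝ) * 3^n' = (A * 3^(n'-n)) * 3^n := by
          rw [mul_assoc, ← pow_add]; congr 2; omega
      _ ≤ (B:ℝ) * 3^n := by nlinarith
  have := (div_le_div_iff₀ h3 h3').mpr key
  linarith

lemma s_inj {a b : ℕ} (h : s a = s b) : a = b := by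
  rcases lt_trichotomy a b with h' | h' | h'
  · exact absurd h (Nat.ne_of_lt (s_mono b a h'))
  · exact h'
  · exact absurd h.symm (Nat.ne_of_lt (s_mono a b h'))


lemma le_help' {n n' : ℕ} (h : n ≤ n') {A B : ℕ} (h2 : A ≤ B * 3^(n'-n)) :
    1 + (A:ℝ)/3^n' ≤ 1 + (B:ℝ)/3^n := by
  have h3 : (0:ℝ) < 3^n := by positivity
  have h3' : (0:ℝ) < 3^n' := by positivity
  have key : (A:ℝ) * 3^n ≤ (B:ℝ) * 3^n' := by
    have hc : (A:ℝ) ≤ B * 3^(n'-n) := by exact_mod_cast h2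
    calc (A:ℝ) * 3^n ≤ (B * 3^(n'-n)) * 3^n := by nlinarith
      _ = (B:ℝ) * 3^n' := by rw [mul_assoc, ← pow_add]; congr 2; omega
  have := (div_le_div_iff₀ h3' h3).mpr key
  linarith

lemma pB_cast (n k : ℕ) : pB n k = 1 + ((3 * s k + 1 : ℕ) : ℝ)/3^n := by
  unfold pB; push_cast; ring

lemma qB_cast (n k : ℕ) : qB n k = 1 + ((3 * s k + 2 : ℕ) : ℝ)/3^n := by
  unfold qB; push_cast; ring

/-- ordered-disjointness of removed intervals -/
lemma removed_disjoint {n k n' k' : ℕ} (hne : ¬(n = n' ∧ k = k')) :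
    qB n k ≤ pB n' k' ∨ qB n' k' ≤ pB n k := by
  have main : ∀ n k n' k', n < n' → qB n k ≤ pB n' k' ∨ qB n' k' ≤ pB n k := by
    intro n k n' k' hlt
    have hd1 : 1 ≤ n' - n := by omega
    have hnn : n ≤ n' := by omega
    have hsub := s_div_le (n'-n) k'
    set d := n' - n with hd
    set k₀ := k' / 2^d with hk₀
    have h3d : 3 * 3^(d-1) = 3^d := by
      rw [← pow_succ']; congr 1; omega
    rcases lt_trichotomy (s k₀) (s k) with hc | hc | hc
    · right
      rw [qB_cast, pB_cast]
      apply le_help' hnn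
      have : s k' + 1 ≤ 3^d * s k := by
        calc s k' + 1 ≤ 3^d * (s k₀ + 1) := hsub.2
          _ ≤ 3^d * s k := by
              have : s k₀ + 1 ≤ s k := by omega
              exact Nat.mul_le_mul_left _ this
      calc 3 * s k' + 2 ≤ 3 * (s k' + 1) := by omega
        _ ≤ 3 * (3^d * s k) := by omega
        _ ≤ (3 * s k + 1) * 3^d := by ring_nf; nlinarith [pow_pos (by norm_num : (0:ℕ) < 3) d]
    · have hk : k₀ = k := s_inj hc
      rcases s_avoid d k' hd1 with h | h
      · right
        rw [qB_cast, pB_cast]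
        apply le_help' hnn
        rw [← hk₀, hk] at h
        calc 3 * s k' + 2 ≤ 3 * (s k' + 1) := by omega
          _ ≤ 3 * (3^(d-1) * (3 * s k + 1)) := by omega
          _ = (3 * s k + 1) * (3 * 3^(d-1)) := by ring
          _ = (3 * s k + 1) * 3^d := by rw [h3d]
      · left
        rw [qB_cast, pB_cast]
        apply le_help hnn
        rw [← hk₀, hk] at h
        calc (3 * s k + 2) * 3^d = 3 * (3^(d-1) * (3 * s k + 2)) := by rw [← h3d]; ring
          _ ≤ 3 * s k' := by omega
          _ ≤ 3 * s k' + 1 := by omega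
    · left
      rw [qB_cast, pB_cast]
      apply le_help hnn
      have h1 : 3^d * s k₀ ≤ s k' := hsub.1
      have h2 : s k + 1 ≤ s k₀ := by omega
      have h3 : 1 ≤ 3^d := Nat.one_le_pow _ _ (by norm_num)
      calc (3 * s k + 2) * 3^d ≤ (3 * s k₀ - 1) * 3^d := by
            apply Nat.mul_le_mul_right; omega
        _ ≤ 3 * (3^d * s k₀) - 3^d := by
            rw [Nat.sub_mul]; ring_nf; omega
        _ ≤ 3 * s k' + 1 := by omega
  rcases lt_trichotomy n n' with h | h | h
  · exact main n k n' k' h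
  · subst h
    have hkk : k ≠ k' := by tauto
    rcases lt_trichotomy (s k) (s k') with hc | hc | hc
    · left; rw [qB_cast, pB_cast]
      apply le_help (le_refl n); simp only [Nat.sub_self, pow_zero, mul_one]; omega
    · exact absurd (s_inj hc) hkk
    · right; rw [qB_cast, pB_cast]
      apply le_help (le_refl n); simp only [Nat.sub_self, pow_zero, mul_one]; omega
  · exact (main n' k' n k h).symm

-- ### index type
def IdxP : (Fin 5 × ℕ × ℕ × ℕ) → Prop := fun x =>
  1 ≤ x.2.1 ∧ x.2.2.1 < 2^(x.2.1 - 1) ∧ (x.1 = 0 → x.2.2.2 = 1) ∧ (x.1 ≠ 0 → 1 ≤ x.2.2.2)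

def Idx := {x : Fin 5 × ℕ × ℕ × ℕ // IdxP x}

instance : DecidableEq Idx := by unfold Idx; infer_instance

def tI (i : Idx) : Fin 5 := i.1.1
def nI (i : Idx) : ℕ := i.1.2.1
def kI (i : Idx) : ℕ := i.1.2.2.1
def mI (i : Idx) : ℕ := i.1.2.2.2

def cen (i : Idx) : ℝ :=
  if tI i = 0 then alphaB (nI i) (kI i)
  else if tI i = 1 then pB (nI i) (kI i) + 17 * sigB (nI i) (mI i)
  else if tI i = 2 then pB (nI i) (kI i) + 13 * sigB (nI i) (mI i)
  else if tI i = 3 then qtB (nI i) (kI i) - 13 * sigB (nI i) (mI i)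
  else qtB (nI i) (kI i) - 17 * sigB (nI i) (mI i)

def rad (i : Idx) : ℝ := if tI i = 0 then rhoB (nI i) else sigB (nI i) (mI i)

lemma rhoB_pos (n : ℕ) : 0 < rhoB n := by unfold rhoB; positivity
lemma sigB_pos (n m : ℕ) : 0 < sigB n m := by unfold sigB; positivity
lemma rad_pos (i : Idx) : 0 < rad i := by
  unfold rad; split <;> [exact rhoB_pos _; exact sigB_pos _ _]
lemma rad_ne (i : Idx) : rad i ≠ 0 := ne_of_gt (rad_pos i)

def mirT : Fin 5 → Fin 5 := fun t =>
  if t = 1 then 2 else if t = 2 then 1 else if t = 3 then 4 else if t = 4 then 3 else 0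

lemma mirT_zero : ∀ t : Fin 5, (mirT t = 0 ↔ t = 0) := by decide

def mir (i : Idx) : Idx :=
  ⟨(mirT (tI i), nI i, kI i, mI i), by
    obtain ⟨h1, h2, h3, h4⟩ := i.2
    refine ⟨h1, h2, ?_, ?_⟩
    · intro h; exact h3 ((mirT_zero _).mp h)
    · intro h; exact h4 (fun h' => h ((mirT_zero _).mpr h'))⟩

def matI (i : Idx) : SL(2, ℝ) := Nmat (cen i) (-(cen (mir i))) (rad i) (rad_ne i)

-- ### arithmetic relations
lemma alphaB_eq (n k : ℕ) : alphaB n k = pB n k + 6 * rhoB n := by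
  unfold alphaB pB qB rhoB; field_simp; ring
lemma qB_eq (n k : ℕ) : qB n k = pB n k + 12 * rhoB n := by
  unfold pB qB rhoB; field_simp; ring
lemma qtB_eq (n k : ℕ) : qtB n k = pB n k + 10 * rhoB n := by
  unfold qtB pB qB rhoB; field_simp; ring

lemma sig_le (n m : ℕ) (hm : 1 ≤ m) : 10 * sigB n m ≤ rhoB n := by
  unfold sigB rhoB
  have h3 : (0:ℝ) < 3^n := by positivity
  have h2 : (2:ℝ) ≤ 2^m := by
    calc (2:ℝ) = 2^1 := by norm_num
      _ ≤ 2^m := by apply pow_le_pow_right₀ <;> norm_num [hm]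
  have h2p : (0:ℝ) < 2^m := by positivity
  rw [mul_one_div, div_le_div_iff₀ (by positivity) (by positivity)]
  nlinarith

lemma sig_half {n m m' : ℕ} (h : m < m') : 2 * sigB n m' ≤ sigB n m := by
  unfold sigB
  have h3 : (0:ℝ) < 3^n := by positivity
  have h2 : (2:ℝ) * 2^m ≤ 2^m' := by
    calc (2:ℝ) * 2^m = 2^(m+1) := by ring
      _ ≤ 2^m' := by apply pow_le_pow_right₀ <;> norm_num; omega
  have h2p : (0:ℝ) < 2^m := by positivity
  have h2p' : (0:ℝ) < 2^m' := by positivity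
  rw [mul_one_div, div_le_div_iff₀ (by positivity) (by positivity)]
  nlinarith

lemma fin5 (t : Fin 5) : t = 0 ∨ t = 1 ∨ t = 2 ∨ t = 3 ∨ t = 4 := by revert t; decide

lemma cen_bounds (i : Idx) :
    pB (nI i) (kI i) + rad i ≤ cen i ∧ cen i ≤ qB (nI i) (kI i) - rad i := by
  have hρ := rhoB_pos (nI i)
  have hσ := sigB_pos (nI i) (mI i)
  have hq := qB_eq (nI i) (kI i)
  have hα := alphaB_eq (nI i) (kI i)
  have hqt := qtB_eq (nI i) (kI i)
  rcases fin5 (tI i) with ht | ht | ht | ht | ht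
  · unfold cen rad
    rw [if_pos ht, if_pos ht]
    constructor <;> linarith
  all_goals (
    have hm : 1 ≤ mI i := i.2.2.2.2 (by show tI i ≠ 0; rw [ht]; decide)
    have hsl := sig_le (nI i) (mI i) hm
    simp only [cen, rad, ht, Fin.reduceEq, reduceIte, if_false, ite_false]
    constructor <;> linarith)

lemma mI_pos (i : Idx) : 1 ≤ mI i := by
  rcases eq_or_ne (tI i) 0 with h | h
  · have e : mI i = 1 := i.2.2.2.1 h; omega
  · exact i.2.2.2.2 h

lemma idx_ext {i j : Idx} (h1 : tI i = tI j) (h2 : nI i = nI j) (h3 : kI i = kI j)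
    (h4 : mI i = mI j) : i = j := by
  apply Subtype.ext
  obtain ⟨⟨a, b, c, d⟩, _⟩ := i
  obtain ⟨⟨a', b', c', d'⟩, _⟩ := j
  simp only [tI, nI, kI, mI] at h1 h2 h3 h4
  simp_all

lemma sep_same {i j : Idx} (hn : nI i = nI j) (hk : kI i = kI j) (hne : i ≠ j) :
    rad i + rad j ≤ |cen i - cen j| := by
  have hρ := rhoB_pos (nI i)
  have hσi := sigB_pos (nI i) (mI i)
  have hσj := sigB_pos (nI i) (mI j)
  have hsli := sig_le (nI i) (mI i) (mI_pos i)
  have hslj := sig_le (nI i) (mI j) (mI_pos j)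
  have hq := qB_eq (nI i) (kI i)
  have hα := alphaB_eq (nI i) (kI i)
  have hqt := qtB_eq (nI i) (kI i)
  rcases fin5 (tI i) with hti|hti|hti|hti|hti <;>
    rcases fin5 (tI j) with htj|htj|htj|htj|htj <;>
    simp only [cen, rad, hti, htj, Fin.reduceEq, reduceIte, ← hn, ← hk] <;>
  · rcases lt_trichotomy (mI i) (mI j) with hmm | hmm | hmm
    · have hh := sig_half (n := nI i) hmm
      first
        | (exfalso; have e1 : mI i = 1 := i.2.2.2.1 hti; have e2 : mI j = 1 := j.2.2.2.1 htj; omega)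
        | (apply le_abs.mpr; left; linarith)
        | (apply le_abs.mpr; right; linarith)
    · first
        | exact absurd (idx_ext (hti.trans htj.symm) hn hk hmm) hne
        | (rw [hmm] at *
           first
            | (apply le_abs.mpr; left; linarith)
            | (apply le_abs.mpr; right; linarith))
    · have hh := sig_half (n := nI i) hmm
      first
        | (exfalso; have e1 : mI i = 1 := i.2.2.2.1 hti; have e2 : mI j = 1 := j.2.2.2.1 htj; omega)
        | (apply le_abs.mpr; left; linarith)
        | (apply le_abs.mpr; right; linarith)

lemma pB_gt_one (n k : ℕ) : 1 < pB n k := by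
  unfold pB
  have : (0:ℝ) < (3 * s k + 1) / 3^n := by positivity
  linarith

lemma one_lt_cen (i : Idx) : 1 < cen i := by
  have := (cen_bounds i).1
  have := pB_gt_one (nI i) (kI i)
  have := rad_pos i
  linarith

lemma rad_le (i : Idx) : rad i ≤ 1/36 := by
  have hn : 1 ≤ nI i := i.2.1
  have h3 : (3:ℝ) ≤ 3 ^ nI i := by
    calc (3:ℝ) = 3^1 := by norm_num
      _ ≤ 3 ^ nI i := by apply pow_le_pow_right₀ <;> norm_num [hn]
  have h2 : (1:ℝ) ≤ 2 ^ mI i := one_le_pow₀ (by norm_num)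
  unfold rad rhoB sigB
  split
  · rw [div_le_div_iff₀ (by positivity) (by norm_num)]; linarith
  · rw [div_le_div_iff₀ (by positivity) (by norm_num)]; nlinarith

lemma sep {i j : Idx} (hne : i ≠ j) : rad i + rad j ≤ |cen i - cen j| := by
  by_cases h : nI i = nI j ∧ kI i = kI j
  · exact sep_same h.1 h.2 hne
  · have hd := removed_disjoint (n := nI i) (k := kI i) (n' := nI j) (k' := kI j) h
    have bi1 := (cen_bounds i).1
    have bi2 := (cen_bounds i).2
    have bj1 := (cen_bounds j).1
    have bj2 := (cen_bounds j).2
    rcases hd with hd | hd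
    · apply le_abs.mpr; right; linarith
    · apply le_abs.mpr; left; linarith

def act (g : SL(2,ℝ)) (z : ℂ) : ℂ :=
  ((g.1 0 0 : ℂ) * z + (g.1 0 1 : ℂ)) / ((g.1 1 0 : ℂ) * z + (g.1 1 1 : ℂ))

lemma det2 (g : SL(2,ℝ)) : g.1 0 0 * g.1 1 1 - g.1 0 1 * g.1 1 0 = 1 := by
  have h := g.2
  rw [Matrix.det_fin_two] at h
  linarith

lemma denom_ne (g : SL(2,ℝ)) {z : ℂ} (hz : 0 < z.im) :
    ((g.1 1 0 : ℂ) * z + (g.1 1 1 : ℂ)) ≠ 0 := by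
  intro h
  have him := congrArg Complex.im h
  have hre := congrArg Complex.re h
  simp [Complex.add_im, Complex.mul_im, Complex.add_re, Complex.mul_re] at him hre
  have hc : g.1 1 0 = 0 := by
    rcases him with h' | h'
    · exact h'
    · exact absurd h' (ne_of_gt hz)
  rw [hc] at hre
  simp at hre
  have := det2 g
  rw [hc, hre] at this
  simp at this

lemma im_act (g : SL(2,ℝ)) {z : ℂ} (hz : 0 < z.im) :
    (act g z).im = z.im / Complex.normSq ((g.1 1 0 : ℂ) * z + (g.1 1 1 : ℂ)) := by
  have hd := denom_ne g hz
  rw [act, Complex.div_im, div_sub_div_same]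
  congr 1
  simp only [Complex.add_im, Complex.mul_im, Complex.add_re, Complex.mul_re,
    Complex.ofReal_re, Complex.ofReal_im]
  linear_combination z.im * det2 g

lemma act_pos (g : SL(2,ℝ)) {z : ℂ} (hz : 0 < z.im) : 0 < (act g z).im := by
  rw [im_act g hz]
  exact div_pos hz (Complex.normSq_pos.mpr (denom_ne g hz))

lemma act_one {z : ℂ} : act 1 z = z := by
  simp [act, Matrix.SpecialLinearGroup.coe_one, Matrix.one_apply]

lemma mul_entry (g h : SL(2,ℝ)) (i j : Fin 2) :
    (g * h).1 i j = g.1 i 0 * h.1 0 j + g.1 i 1 * h.1 1 j := by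
  rw [Matrix.SpecialLinearGroup.coe_mul, Matrix.mul_apply, Fin.sum_univ_two]

lemma act_mul (g h : SL(2,ℝ)) {z : ℂ} (hz : 0 < z.im) :
    act (g * h) z = act g (act h z) := by
  have h1 := denom_ne h hz
  have hw : 0 < (act h z).im := act_pos h hz
  have h2 := denom_ne g hw
  have key : ((g.1 1 0 : ℂ)) * ((h.1 0 0 : ℂ) * z + (h.1 0 1 : ℂ))
      + (g.1 1 1 : ℂ) * ((h.1 1 0 : ℂ) * z + (h.1 1 1 : ℂ))
      = ((g.1 1 0 : ℂ) * (act h z) + (g.1 1 1 : ℂ)) * ((h.1 1 0 : ℂ) * z + (h.1 1 1 : ℂ)) := by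
    rw [act]; rw [add_mul, mul_assoc, div_mul_cancel₀ _ h1]
  have h2' : ((g.1 1 0 : ℂ)) * ((h.1 0 0 : ℂ) * z + (h.1 0 1 : ℂ))
      + (g.1 1 1 : ℂ) * ((h.1 1 0 : ℂ) * z + (h.1 1 1 : ℂ)) ≠ 0 := by
    rw [key]; exact mul_ne_zero h2 h1
  rw [act, act, act]
  rw [mul_entry, mul_entry, mul_entry, mul_entry]
  rw [act] at h2
  push_cast
  have hD1 : ((g.1 1 0 : ℂ) * (h.1 0 0 : ℂ) + (g.1 1 1 : ℂ) * (h.1 1 0 : ℂ)) * z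
      + ((g.1 1 0 : ℂ) * (h.1 0 1 : ℂ) + (g.1 1 1 : ℂ) * (h.1 1 1 : ℂ)) ≠ 0 := by
    intro h0; apply h2'; linear_combination h0
  rw [div_eq_div_iff hD1 h2]
  field_simp
  ring

lemma act_inv (g : SL(2,ℝ)) {z : ℂ} (hz : 0 < z.im) : act g (act g⁻¹ z) = z := by
  rw [← act_mul g g⁻¹ hz, mul_inv_cancel, act_one]

lemma Nmat_apply {β β' r : ℝ} (hr : r ≠ 0) {z : ℂ} (hz : 0 < z.im) :
    act (Nmat β β' r hr) z - β' = -(r^2 : ℝ) / (z - β) := by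
  have hzb : z - (β:ℂ) ≠ 0 := by
    intro h
    have := congrArg Complex.im h
    simp at this
    exact absurd this (ne_of_gt hz)
  have hrc : (r : ℂ) ≠ 0 := by exact_mod_cast hr
  show (((β'/r : ℝ) : ℂ) * z + ((-(β * β' + r ^ 2) / r : ℝ) : ℂ)) /
      (((1/r : ℝ) : ℂ) * z + ((-β/r : ℝ) : ℂ)) - (β' : ℂ) = -(r^2 : ℝ) / (z - β)
  push_cast
  rw [div_sub' (by
    intro h0
    apply hzb
    have : ((1:ℂ)/r) * (z - β) = 0 := by rw [← h0]; ring
    rcases mul_eq_zero.mp this with h' | h'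
    · exact absurd h' (by simp [hrc])
    · exact h'), div_eq_div_iff (by
    intro h0
    apply hzb
    have : ((1:ℂ)/r) * (z - β) = 0 := by rw [← h0]; ring
    rcases mul_eq_zero.mp this with h' | h'
    · exact absurd h' (by simp [hrc])
    · exact h') hzb]
  field_simp
  ring

lemma Nmat_contract {β β' r : ℝ} (hr : r ≠ 0) {z : ℂ} (hz : 0 < z.im) :
    ‖act (Nmat β β' r hr) z - (β' : ℂ)‖ * ‖z - (β : ℂ)‖ = r^2 := by
  have hzb : z - (β:ℂ) ≠ 0 := by
    intro h
    have := congrArg Complex.im h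
    simp at this
    exact absurd this (ne_of_gt hz)
  rw [← norm_mul, Nmat_apply hr hz, div_mul_cancel₀ _ hzb]
  rw [← Complex.ofReal_neg, Complex.norm_real, Real.norm_eq_abs, abs_neg, abs_of_nonneg (sq_nonneg r)]

-- ### letters
def Sc (x : Idx × Bool) : ℝ := if x.2 then cen x.1 else -(cen (mir x.1))
def Tc (x : Idx × Bool) : ℝ := if x.2 then -(cen (mir x.1)) else cen x.1
def lmat (x : Idx × Bool) : SL(2,ℝ) := cond x.2 (matI x.1) (matI x.1)⁻¹
def wprod (L : List (Idx × Bool)) : SL(2,ℝ) := (L.map lmat).prod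

lemma mirT_mirT : ∀ t, mirT (mirT t) = t := by decide

lemma mir_mir (i : Idx) : mir (mir i) = i := by
  apply idx_ext
  · show mirT (mirT (tI i)) = tI i
    exact mirT_mirT _
  all_goals rfl

lemma tI_mir (i : Idx) : tI (mir i) = mirT (tI i) := rfl
lemma nI_mir (i : Idx) : nI (mir i) = nI i := rfl
lemma mI_mir (i : Idx) : mI (mir i) = mI i := rfl

lemma rad_mir (i : Idx) : rad (mir i) = rad i := by
  unfold rad
  rw [tI_mir, nI_mir, mI_mir]
  rcases eq_or_ne (tI i) 0 with h | h
  · rw [if_pos ((mirT_zero _).mpr h), if_pos h]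
  · rw [if_neg (fun hc => h ((mirT_zero _).mp hc)), if_neg h]

lemma mir_inj {i j : Idx} (h : mir i = mir j) : i = j := by
  rw [← mir_mir i, ← mir_mir j, h]

lemma letter_contract (x : Idx × Bool) {z : ℂ} (hz : 0 < z.im)
    (hfar : rad x.1 < ‖z - (Sc x : ℂ)‖) :
    ‖act (lmat x) z - (Tc x : ℂ)‖ < rad x.1 := by
  obtain ⟨i, b⟩ := x
  have hr := rad_pos i
  cases b
  · -- inverse letter
    simp only [Sc, Tc, lmat, cond_false, if_false, ite_false, Bool.false_eq_true] at *
    have hw : 0 < (act (matI i)⁻¹ z).im := act_pos _ hz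
    have hkey := Nmat_contract (rad_ne i) (β := cen i) (β' := -(cen (mir i))) hw
    rw [show Nmat (cen i) (-(cen (mir i))) (rad i) (rad_ne i) = matI i from rfl] at hkey
    rw [act_inv _ hz] at hkey
    -- hkey : abs (z - (-(cen (mir i)))) * abs (act (matI i)⁻¹ z - cen i) = rad i ^ 2
    have habs : (0:ℝ) ≤ ‖act (matI i)⁻¹ z - (cen i : ℂ)‖ := norm_nonneg _
    push_cast at hkey hfar ⊢
    nlinarith [hkey, hfar, habs]
  · simp only [Sc, Tc, lmat, cond_true, if_true] at *
    have hkey := Nmat_contract (rad_ne i) (β := cen i) (β' := -(cen (mir i))) hz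
    rw [show Nmat (cen i) (-(cen (mir i))) (rad i) (rad_ne i) = matI i from rfl] at hkey
    have habs : (0:ℝ) ≤ ‖act (matI i) z - ((-(cen (mir i)) : ℝ) : ℂ)‖ :=
      norm_nonneg _
    push_cast at hkey hfar ⊢
    nlinarith [hkey, hfar, habs]

lemma letter_sep (x y : Idx × Bool) (hxy : ¬(y.1 = x.1 ∧ y.2 = !x.2)) :
    rad x.1 + rad y.1 ≤ |Sc x - Tc y| := by
  have hpos : ∀ i j : Idx, rad i + rad j ≤ cen i + cen j := by
    intro i j
    have := one_lt_cen i; have := one_lt_cen j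
    have := rad_le i; have := rad_le j
    linarith
  obtain ⟨i, bi⟩ := x
  obtain ⟨j, bj⟩ := y
  cases bi <;> cases bj <;>
    simp only [Sc, Tc, if_true, if_false, ite_true, ite_false, Bool.false_eq_true,
      cond_true, cond_false] at *
  · -- bi = ff, bj = ff : Sc = -(cen (mir i)), Tc = cen j
    rw [abs_sub_comm, show cen j - -(cen (mir i)) = cen j + cen (mir i) by ring,
      abs_of_pos (by have := one_lt_cen j; have := one_lt_cen (mir i); linarith)]
    have := hpos (mir i) j
    rw [rad_mir] at this
    linarith
  · -- bi = ff, bj = tt : Sc = -(cen (mir i)), Tc = -(cen (mir j)); need i ≠ j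
    have hij : i ≠ j := by
      intro h; exact hxy ⟨h.symm, rfl⟩
    have := sep (i := mir i) (j := mir j) (fun h => hij (mir_inj h))
    rw [rad_mir, rad_mir] at this
    calc rad i + rad j ≤ |cen (mir i) - cen (mir j)| := this
      _ = |-(cen (mir i)) - -(cen (mir j))| := by rw [abs_sub_comm]; congr 1; ring
  · -- bi = tt, bj = ff : Sc = cen i, Tc = cen j ; need i ≠ j
    have hij : i ≠ j := by
      intro h; exact hxy ⟨h.symm, rfl⟩
    exact sep (fun h => hij h)
  · -- bi = tt, bj = tt : Sc = cen i, Tc = -(cen (mir j))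
    rw [show cen i - -(cen (mir j)) = cen i + cen (mir j) by ring,
      abs_of_pos (by have := one_lt_cen i; have := one_lt_cen (mir j); linarith)]
    have := hpos i (mir j)
    rw [rad_mir] at this
    linarith

def NoCancel (L : List (Idx × Bool)) : Prop :=
  ∀ (L₁ L₂ : List (Idx × Bool)) (x : Idx) (b : Bool), L ≠ L₁ ++ (x, b) :: (x, !b) :: L₂

lemma noCancel_toWord (w : FreeGroup Idx) : NoCancel w.toWord := by
  intro L₁ L₂ x b h
  exact FreeGroup.reduce.not (L₁ := w.toWord) (by rw [FreeGroup.reduce_toWord]; exact h)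

lemma noCancel_tail {x : Idx × Bool} {L : List (Idx × Bool)} (h : NoCancel (x :: L)) :
    NoCancel L := by
  intro L₁ L₂ a b he
  exact h (x :: L₁) L₂ a b (by rw [he]; rfl)

lemma I_im : (0:ℝ) < Complex.I.im := by simp

lemma ping : ∀ (L : List (Idx × Bool)) (x : Idx × Bool), NoCancel (x :: L) →
    ‖act (wprod (x :: L)) Complex.I - (Tc x : ℂ)‖ < rad x.1 := by
  intro L
  induction L with
  | nil =>
    intro x _
    have hw : wprod [x] = lmat x := by simp [wprod]
    rw [hw]
    apply letter_contract x I_im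
    have h1 : (1:ℝ) ≤ ‖Complex.I - (Sc x : ℂ)‖ := by
      have him : (Complex.I - (Sc x : ℂ)).im = 1 := by simp
      calc (1:ℝ) = |(Complex.I - (Sc x:ℂ)).im| := by rw [him]; norm_num
        _ ≤ ‖_‖ := Complex.abs_im_le_norm _
    have := rad_le x.1
    linarith
  | cons y L IH =>
    intro x hnc
    have hy := IH y (noCancel_tail hnc)
    have hsep : rad x.1 + rad y.1 ≤ |Sc x - Tc y| := by
      apply letter_sep
      intro hc
      have hy_eq : y = (x.1, !x.2) := Prod.ext hc.1 hc.2
      exact hnc [] L x.1 x.2 (by rw [hy_eq]; rfl)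
    have hu_pos : 0 < (act (wprod (y :: L)) Complex.I).im := act_pos _ I_im
    have hw : wprod (x :: y :: L) = lmat x * wprod (y :: L) := by simp [wprod]
    rw [hw, act_mul _ _ I_im]
    apply letter_contract x hu_pos
    set u := act (wprod (y :: L)) Complex.I with hu
    have tri : ‖(Sc x : ℂ) - (Tc y : ℂ)‖ ≤
        ‖(Sc x :ℂ) - u‖ + ‖u - (Tc y : ℂ)‖ :=
      norm_sub_le_norm_sub_add_norm_sub _ _ _
    have habs : ‖(Sc x :ℂ) - (Tc y:ℂ)‖ = |Sc x - Tc y| := by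
      rw [← Complex.ofReal_sub, Complex.norm_real, Real.norm_eq_abs]
    rw [norm_sub_rev]
    rw [habs] at tri
    linarith

def phi : FreeGroup Idx →* SL(2,ℝ) := FreeGroup.lift matI

lemma phi_eq_wprod (w : FreeGroup Idx) : phi w = wprod w.toWord := by
  conv_lhs => rw [← FreeGroup.mk_toWord (x := w)]
  rw [phi, FreeGroup.lift_mk]
  rfl

lemma phi_of (i : Idx) : phi (FreeGroup.of i) = matI i := FreeGroup.lift_apply_of

lemma nontrivial_apart {w : FreeGroup Idx} (hw : w ≠ 1) :
    36 < ((phi w).1 1 0)^2 + ((phi w).1 1 1)^2 := by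
  obtain ⟨x, L, hxL⟩ : ∃ x L, w.toWord = x :: L := by
    cases h : w.toWord with
    | nil => exact absurd (FreeGroup.toWord_eq_nil_iff.mp h) hw
    | cons a l => exact ⟨a, l, rfl⟩
  have hping := ping L x (hxL ▸ noCancel_toWord w)
  set g := phi w with hgdef
  have hg : act g Complex.I = act (wprod (x::L)) Complex.I := by
    rw [hgdef, phi_eq_wprod, hxL]
  have hsmall : (act g Complex.I).im < 1/36 := by
    have h1 : (act g Complex.I).im ≤ |(act (wprod (x::L)) Complex.I - (Tc x:ℂ)).im| := by
      rw [hg]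
      have : (act (wprod (x::L)) Complex.I - (Tc x:ℂ)).im
          = (act (wprod (x::L)) Complex.I).im := by simp
      rw [this]
      exact le_abs_self _
    have h2 : |(act (wprod (x::L)) Complex.I - (Tc x:ℂ)).im|
        ≤ ‖act (wprod (x::L)) Complex.I - (Tc x:ℂ)‖ := Complex.abs_im_le_norm _
    have := rad_le x.1
    linarith
  have him2 : (act g Complex.I).im = 1 / ((g.1 1 0)^2 + (g.1 1 1)^2) := by
    rw [im_act g I_im]
    have hn : Complex.normSq ((g.1 1 0 : ℂ) * Complex.I + (g.1 1 1 : ℂ))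
        = (g.1 1 0)^2 + (g.1 1 1)^2 := by
      simp [Complex.normSq_apply, Complex.add_re, Complex.add_im, Complex.mul_re,
        Complex.mul_im]
      ring
    rw [hn]
    simp
  have hpos : 0 < (g.1 1 0)^2 + (g.1 1 1)^2 := by
    have := act_pos g I_im
    rw [him2] at this
    by_contra hc
    push_neg at hc
    have : (1:ℝ) / ((g.1 1 0)^2 + (g.1 1 1)^2) ≤ 0 := by
      apply div_nonpos_of_nonneg_of_nonpos <;> [norm_num; exact hc]
    linarith [him2 ▸ act_pos g I_im]
  rw [him2] at hsmall
  exact lt_of_one_div_lt_one_div hpos hsmall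

lemma phi_eq_one {w : FreeGroup Idx} (h : phi w = 1) : w = 1 := by
  by_contra hw
  have h36 := nontrivial_apart hw
  rw [h] at h36
  have e0 : ((1 : SL(2,ℝ)).1 1 0) = 0 := by
    rw [Matrix.SpecialLinearGroup.coe_one, Matrix.one_apply]; norm_num
  have e1 : ((1 : SL(2,ℝ)).1 1 1) = 1 := by
    rw [Matrix.SpecialLinearGroup.coe_one, Matrix.one_apply]; norm_num
  rw [e0, e1] at h36
  norm_num at h36


lemma Nmat_congr {a b c d e f : ℝ} (h1 : a = d) (h2 : b = e) (h3 : c = f)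
    (hc : c ≠ 0) (hf : f ≠ 0) : Nmat a b c hc = Nmat d e f hf := by
  subst h1; subst h2; subst h3; rfl

/-- build an index -/
def mkIdx (t : Fin 5) (n k m : ℕ) (hn : 1 ≤ n) (hk : k < 2^(n-1)) (hm0 : t = 0 → m = 1)
    (hm1 : t ≠ 0 → 1 ≤ m) : Idx := ⟨(t, n, k, m), hn, hk, hm0, hm1⟩

lemma genset_eq : Set.range matI =
    ({g | ∃ n k : ℕ, 1 ≤ n ∧ k < 2 ^ (n - 1) ∧
        g = Nmat (alphaB n k) (-(alphaB n k)) (rhoB n) (rhoB_ne n)} ∪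
      {g | ∃ n m k : ℕ, 1 ≤ n ∧ 1 ≤ m ∧ k < 2 ^ (n - 1) ∧
        (g = Nmat (pB n k + 17 * sigB n m) (-(pB n k + 13 * sigB n m)) (sigB n m)
            (sigB_ne n m) ∨
         g = Nmat (pB n k + 13 * sigB n m) (-(pB n k + 17 * sigB n m)) (sigB n m)
            (sigB_ne n m) ∨
         g = Nmat (qtB n k - 13 * sigB n m) (-(qtB n k - 17 * sigB n m)) (sigB n m)
            (sigB_ne n m) ∨
         g = Nmat (qtB n k - 17 * sigB n m) (-(qtB n k - 13 * sigB n m)) (sigB n m)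
            (sigB_ne n m))} : Set SL(2,ℝ)) := by
  ext g
  constructor
  · rintro ⟨i, rfl⟩
    have hn : 1 ≤ nI i := i.2.1
    have hk : kI i < 2^(nI i - 1) := i.2.2.1
    rcases fin5 (tI i) with ht | ht | ht | ht | ht
    · left
      refine ⟨nI i, kI i, hn, hk, ?_⟩
      exact (Nmat_congr (by simp [cen, ht]) (by have ht' : i.1.1 = _ := ht; simp [cen, mir, mirT, tI, nI, kI, mI, ht'])
        (by simp [rad, ht]) _ _).symm
    · right
      refine ⟨nI i, mI i, kI i, hn, mI_pos i, hk, Or.inl ?_⟩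
      exact (Nmat_congr (by simp [cen, ht]) (by have ht' : i.1.1 = _ := ht; simp [cen, mir, mirT, tI, nI, kI, mI, ht'])
        (by simp [rad, ht]) _ _).symm
    · right
      refine ⟨nI i, mI i, kI i, hn, mI_pos i, hk, Or.inr (Or.inl ?_)⟩
      exact (Nmat_congr (by simp [cen, ht]) (by have ht' : i.1.1 = _ := ht; simp [cen, mir, mirT, tI, nI, kI, mI, ht'])
        (by simp [rad, ht]) _ _).symm
    · right
      refine ⟨nI i, mI i, kI i, hn, mI_pos i, hk, Or.inr (Or.inr (Or.inl ?_))⟩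
      exact (Nmat_congr (by simp [cen, ht]) (by have ht' : i.1.1 = _ := ht; simp [cen, mir, mirT, tI, nI, kI, mI, ht'])
        (by simp [rad, ht]) _ _).symm
    · right
      refine ⟨nI i, mI i, kI i, hn, mI_pos i, hk, Or.inr (Or.inr (Or.inr ?_))⟩
      exact (Nmat_congr (by simp [cen, ht]) (by have ht' : i.1.1 = _ := ht; simp [cen, mir, mirT, tI, nI, kI, mI, ht'])
        (by simp [rad, ht]) _ _).symm
  · rintro (⟨n, k, hn, hk, rfl⟩ | ⟨n, m, k, hn, hm, hk, (rfl | rfl | rfl | rfl)⟩)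
    · exact ⟨mkIdx 0 n k 1 hn hk (fun _ => rfl) (fun h => absurd rfl h),
        Nmat_congr (by simp [cen, mkIdx, tI, nI, kI]) (by simp [cen, mir, mirT, mkIdx, tI, nI, kI])
          (by simp [rad, mkIdx, tI, nI]) _ _⟩
    · exact ⟨mkIdx 1 n k m hn hk (fun h => absurd h (by decide)) (fun _ => hm),
        Nmat_congr (by simp [cen, mkIdx, tI, nI, kI, mI]) (by simp [cen, mir, mirT, mkIdx, tI, nI, kI, mI])
          (by simp [rad, mkIdx, tI, nI, mI]) _ _⟩
    · exact ⟨mkIdx 2 n k m hn hk (fun h => absurd h (by decide)) (fun _ => hm),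
        Nmat_congr (by simp [cen, mkIdx, tI, nI, kI, mI]) (by simp [cen, mir, mirT, mkIdx, tI, nI, kI, mI])
          (by simp [rad, mkIdx, tI, nI, mI]) _ _⟩
    · exact ⟨mkIdx 3 n k m hn hk (fun h => absurd h (by decide)) (fun _ => hm),
        Nmat_congr (by simp [cen, mkIdx, tI, nI, kI, mI]) (by simp [cen, mir, mirT, mkIdx, tI, nI, kI, mI])
          (by simp [rad, mkIdx, tI, nI, mI]) _ _⟩
    · exact ⟨mkIdx 4 n k m hn hk (fun h => absurd h (by decide)) (fun _ => hm),
        Nmat_congr (by simp [cen, mkIdx, tI, nI, kI, mI]) (by simp [cen, mir, mirT, mkIdx, tI, nI, kI, mI])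
          (by simp [rad, mkIdx, tI, nI, mI]) _ _⟩

lemma phi_range : phi.range = ΓB := by
  rw [phi, FreeGroup.range_lift_eq_closure, genset_eq, ΓB]


/-- The topology on `SL(2,ℝ)` induced from the matrix space. -/
instance : TopologicalSpace SL(2, ℝ) :=
  inferInstanceAs (TopologicalSpace {A : Matrix (Fin 2) (Fin 2) ℝ // A.det = 1})


lemma entry_continuous (i j : Fin 2) :
    Continuous (fun g : SL(2,ℝ) => g.1 i j) := by
  exact (Continuous.matrix_elem (continuous_subtype_val) i j)

lemma gamma_discrete : DiscreteTopology ΓB := by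
  apply discreteTopology_iff_isOpen_singleton.mpr
  rintro ⟨g, hg⟩
  let F : SL(2,ℝ) → ℝ := fun h =>
    ((g⁻¹.1 1 0) * h.1 0 0 + (g⁻¹.1 1 1) * h.1 1 0)^2 +
    ((g⁻¹.1 1 0) * h.1 0 1 + (g⁻¹.1 1 1) * h.1 1 1)^2
  have hF : ∀ h : SL(2,ℝ), F h = ((g⁻¹ * h).1 1 0)^2 + ((g⁻¹ * h).1 1 1)^2 := by
    intro h
    rw [mul_entry, mul_entry]
  have hFc : Continuous F := by
    apply Continuous.add <;>
    · apply Continuous.pow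
      apply Continuous.add <;>
      · apply Continuous.mul continuous_const
        apply entry_continuous
  have hset : ({⟨g, hg⟩} : Set ΓB) = (fun y : ΓB => F y.1) ⁻¹' (Set.Iio 36) := by
    ext ⟨y, hy⟩
    simp only [Set.mem_singleton_iff, Set.mem_preimage, Set.mem_Iio, Subtype.mk.injEq]
    constructor
    · rintro rfl
      rw [hF]
      rw [inv_mul_cancel]
      have e0 : ((1 : SL(2,ℝ)).1 1 0) = 0 := by
        rw [Matrix.SpecialLinearGroup.coe_one, Matrix.one_apply]; norm_num
      have e1 : ((1 : SL(2,ℝ)).1 1 1) = 1 := by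
        rw [Matrix.SpecialLinearGroup.coe_one, Matrix.one_apply]; norm_num
      rw [e0, e1]; norm_num
    · intro hlt
      by_contra hne
      have hmem : g⁻¹ * y ∈ ΓB := mul_mem (inv_mem hg) hy
      rw [← phi_range] at hmem
      obtain ⟨w, hw⟩ := hmem
      have hwne : w ≠ 1 := by
        intro h1
        rw [h1, map_one] at hw
        exact hne (inv_mul_eq_one.mp hw.symm).symm
      have := nontrivial_apart hwne
      rw [hw, hF y] at *
      linarith
  rw [hset]
  exact (hFc.comp continuous_subtype_val).isOpen_preimage _ isOpen_Iio

lemma wprod_mem_closure {T : Set Idx} :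
    ∀ L : List (Idx × Bool), (∀ p ∈ L, p.1 ∈ T) →
    wprod L ∈ Subgroup.closure (matI '' T) := by
  intro L
  induction L with
  | nil => intro _; exact one_mem _
  | cons x L IH =>
    intro h
    have hx : matI x.1 ∈ Subgroup.closure (matI '' T) :=
      Subgroup.subset_closure ⟨x.1, h x List.mem_cons_self, rfl⟩
    have hl : wprod L ∈ Subgroup.closure (matI '' T) :=
      IH (fun p hp => h p (List.mem_cons_of_mem _ hp))
    have hw : wprod (x :: L) = lmat x * wprod L := by simp [wprod]
    rw [hw]
    apply mul_mem _ hl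
    cases hb : x.2 <;> simp only [lmat, hb, cond_true, cond_false]
    · exact inv_mem hx
    · exact hx

lemma phi_mem_closure {T : Set Idx} {w : FreeGroup Idx}
    (h : ∀ p ∈ w.toWord, p.1 ∈ T) : phi w ∈ Subgroup.closure (matI '' T) := by
  rw [phi_eq_wprod]
  exact wprod_mem_closure _ h

def iot (m : ℕ) : Idx := mkIdx 1 1 0 (m+1) (le_refl 1) (by norm_num)
  (fun h => absurd h (by decide)) (fun _ => by omega)

instance : Infinite Idx := by
  apply Infinite.of_injective iot
  intro a b h
  have : mI (iot a) = mI (iot b) := by rw [h]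
  simpa [iot, mkIdx, mI] using this

lemma iot_inj : Function.Injective iot := by
  intro a b h
  have : mI (iot a) = mI (iot b) := by rw [h]
  simpa [iot, mkIdx, mI] using this

lemma gamma_not_fg :
    ¬ ∃ F : Set SL(2, ℝ), F.Finite ∧ Subgroup.closure F = ΓB := by
  rintro ⟨F, hFfin, hFcl⟩
  have hFsub : F ⊆ (ΓB : Set SL(2,ℝ)) := by
    intro f hf
    rw [← hFcl]
    exact Subgroup.subset_closure hf
  have hrange : ∀ f : F, ∃ w : FreeGroup Idx, phi w = f.1 := by
    intro f
    have : f.1 ∈ phi.range := by rw [phi_range]; exact hFsub f.2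
    exact this
  choose wf hwf using hrange
  haveI : Finite F := hFfin.to_subtype
  set T : Set Idx := ⋃ f : F, {i | ∃ b, (i, b) ∈ (wf f).toWord} with hT
  have hTfin : T.Finite := by
    apply Set.finite_iUnion
    intro f
    apply Set.Finite.subset (List.finite_toSet (((wf f).toWord).map Prod.fst))
    rintro i ⟨b, hb⟩
    simp only [List.mem_map]
    exact ⟨(i, b), hb, rfl⟩
  have hGle : ΓB ≤ Subgroup.closure (matI '' T) := by
    rw [← hFcl, Subgroup.closure_le]
    intro f hf
    have hmem := phi_mem_closure (T := T) (w := wf ⟨f, hf⟩)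
      (fun p hp => Set.mem_iUnion.mpr ⟨⟨f, hf⟩, ⟨p.2, hp⟩⟩)
    rwa [hwf ⟨f, hf⟩] at hmem
  -- pick an index outside T
  have hex : ∃ m, iot m ∉ T := by
    by_contra hc
    push_neg at hc
    have hsub : Set.range iot ⊆ T := by rintro _ ⟨m, rfl⟩; exact hc m
    exact (hTfin.subset hsub).not_infinite (Set.infinite_range_of_injective iot_inj)
  obtain ⟨m₀, hm₀⟩ := hex
  set i₀ := iot m₀
  have hmem : matI i₀ ∈ ΓB := by
    rw [← phi_range]
    exact ⟨FreeGroup.of i₀, phi_of i₀⟩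
  have hmem2 : matI i₀ ∈ Subgroup.closure (matI '' T) := hGle hmem
  have himg : matI '' T = phi '' (FreeGroup.of '' T) := by
    rw [← Set.image_comp]
    apply congrArg (· '' T)
    funext i
    exact (phi_of i).symm
  rw [himg, ← MonoidHom.map_closure] at hmem2
  obtain ⟨w, hwT, hw⟩ := hmem2
  have hweq : w = FreeGroup.of i₀ := by
    have h1 : phi (w * (FreeGroup.of i₀)⁻¹) = 1 := by
      rw [map_mul, map_inv, hw, phi_of, mul_inv_cancel]
    have := phi_eq_one h1
    exact mul_inv_eq_one.mp this
  let χ : FreeGroup Idx →* Multiplicative ℤ :=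
    FreeGroup.lift (fun j => if j = i₀ then Multiplicative.ofAdd (1:ℤ) else 1)
  have hχw : χ w = 1 := by
    have hle : Subgroup.closure (FreeGroup.of '' T) ≤ χ.ker := by
      rw [Subgroup.closure_le]
      rintro _ ⟨i, hiT, rfl⟩
      have hne : i ≠ i₀ := fun h => hm₀ (h ▸ hiT)
      simp only [SetLike.mem_coe, MonoidHom.mem_ker, χ, FreeGroup.lift_apply_of, if_neg hne]
    exact hle hwT
  rw [hweq] at hχw
  simp only [χ, FreeGroup.lift_apply_of, if_pos rfl] at hχw
  exact absurd hχw (by decide)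


/-- `Γ_B` is an infinitely generated discrete subgroup of `SL(2,ℝ)`. -/
theorem stmt_16 :
    DiscreteTopology ΓB ∧ ¬ ∃ F : Set SL(2, ℝ), F.Finite ∧ Subgroup.closure F = ΓB :=
  ⟨gamma_discrete, gamma_not_fg⟩
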